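/- For an odd prime p, any integer s, any integer α, and any integer k with 0 ≤ k ≤ p-1, the binomial coefficient C(α + s·p, k) is congruent to C(α, k) + s·p · ∑_{j=1}^{k} C(α, k-j) · (-1)^{j-1} / j modulo p^2, where each term C(α,k-j)·(-1)^{j-1}/j is interpreted modulo p (since p·(1/j mod p) is well-defined mod p^2). -/

import Mathlib

/-- Generalized binomial coefficient `C(x,k) = x(x-1)⋯(x-k+1)/k!` for rational `x`. -/
def gbinom (x : ℚ) (k : ℕ) : ℚ := (∏ i ∈ Finset.range k, (x - i)) / (Nat.factorial k)

lemma gbinom_zero (x : ℚ) : gbinom x 0 = 1 := by simp [gbinom]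

lemma gbinom_nat_zero_pos (k : ℕ) (hk : k ≠ 0) : gbinom 0 k = 0 := by
  unfold gbinom
  rw [Finset.prod_eq_zero (Finset.mem_range.mpr (Nat.pos_of_ne_zero hk)) (by simp)]
  simp

lemma gbinom_pascal (x : ℚ) (k : ℕ) :
    gbinom (x+1) (k+1) = gbinom x (k+1) + gbinom x k := by
  unfold gbinom
  rw [Finset.prod_range_succ' (fun i => x + 1 - (i:ℕ)), Finset.prod_range_succ]
  have h1 : ∀ i : ℕ, x + 1 - ((i:ℕ)+1 : ℕ) = x - i := by intro i; push_cast; ring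
  simp only [h1, Nat.cast_zero, sub_zero, Nat.factorial_succ]
  have h2 : ((k+1) * k.factorial : ℕ) ≠ 0 := by positivity
  field_simp
  push_cast
  ring

lemma gbinom_absorb (x : ℚ) (j : ℕ) :
    ((j:ℚ)+1) * gbinom x (j+1) = x * gbinom (x-1) j := by
  unfold gbinom
  rw [Finset.prod_range_succ' (fun i => x - (i:ℕ))]
  have h1 : ∀ i : ℕ, x - ((i:ℕ)+1 : ℕ) = x - 1 - i := by intro i; push_cast; ring
  simp only [h1, Nat.cast_zero, sub_zero, Nat.factorial_succ]
  have hf : (j.factorial : ℚ) ≠ 0 := by positivity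
  push_cast
  field_simp

/-- Integer-argument generalized binomial coefficients are integers. -/
lemma gbinom_int (n : ℤ) (k : ℕ) : ∃ z : ℤ, gbinom (n:ℚ) k = z := by
  induction n using Int.induction_on generalizing k with
  | zero =>
    rcases Nat.eq_zero_or_pos k with hk | hk
    · exact ⟨1, by simp [hk, gbinom_zero]⟩
    · exact ⟨0, by simpa using gbinom_nat_zero_pos k hk.ne'⟩
  | succ n ih =>
    rcases Nat.eq_zero_or_pos k with hk | hk
    · exact ⟨1, by simp [hk, gbinom_zero]⟩
    · obtain ⟨k, rfl⟩ := Nat.exists_eq_succ_of_ne_zero hk.ne'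
      obtain ⟨a, ha⟩ := ih (k+1)
      obtain ⟨b, hb⟩ := ih k
      refine ⟨a + b, ?_⟩
      push_cast at ha hb ⊢
      rw [gbinom_pascal, ha, hb]
  | pred n ih =>
    induction k with
    | zero => exact ⟨1, by simp [gbinom_zero]⟩
    | succ k ihk =>
      obtain ⟨a, ha⟩ := ih (k+1)
      obtain ⟨b, hb⟩ := ihk
      refine ⟨a - b, ?_⟩
      push_cast at ha hb ⊢
      have key := gbinom_pascal (-(n:ℚ)-1) k
      have h1 : -(n:ℚ)-1+1 = -(n:ℚ) := by ring
      rw [h1] at key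
      linarith [key, ha, hb]

noncomputable def gS (x : ℚ) (n : ℤ) (k : ℕ) : ℚ :=
  ∑ j ∈ Finset.range (k+1), gbinom x (k-j) * gbinom (n:ℚ) j

lemma gS_pascal (x : ℚ) (n : ℤ) (k : ℕ) :
    gS x (n+1) (k+1) = gS x n (k+1) + gS x n k := by
  unfold gS
  rw [Finset.sum_range_succ' (fun j => gbinom x (k+1-j) * gbinom ((n+1:ℤ):ℚ) j),
      Finset.sum_range_succ' (fun j => gbinom x (k+1-j) * gbinom ((n:ℤ):ℚ) j)]
  have hc : ((n+1:ℤ):ℚ) = (n:ℚ) + 1 := by push_cast; ring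
  simp only [hc, gbinom_pascal, Nat.succ_sub_succ, Nat.sub_zero, gbinom_zero, mul_add]
  rw [Finset.sum_add_distrib]
  ring

/-- Vandermonde identity for generalized binomial coefficients with integer shift. -/
lemma gbinom_vandermonde (x : ℚ) (n : ℤ) (k : ℕ) :
    gbinom (x + n) k = gS x n k := by
  induction n using Int.induction_on generalizing k with
  | zero =>
    unfold gS
    rw [Finset.sum_range_succ' (fun j => gbinom x (k-j) * gbinom ((0:ℤ):ℚ) j)]
    have h0 : ∀ j : ℕ, gbinom (0:ℚ) (j+1) = 0 := fun j =>
      gbinom_nat_zero_pos (j+1) (Nat.succ_ne_zero j)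
    simp [h0, gbinom_zero]
  | succ n ih =>
    rcases Nat.eq_zero_or_pos k with hk | hk
    · subst hk
      simp [gS, gbinom_zero]
    · obtain ⟨k, rfl⟩ := Nat.exists_eq_succ_of_ne_zero hk.ne'
      rw [gS_pascal]
      have hc : x + ((n:ℤ)+1 : ℤ) = (x + (n:ℤ)) + 1 := by push_cast; ring
      rw [hc, gbinom_pascal, ih (k+1), ih k]
  | pred n ih =>
    induction k with
    | zero => simp [gS, gbinom_zero]
    | succ k ihk =>
      have hs := gS_pascal x (-(n:ℤ)-1) k
      rw [show (-(n:ℤ)-1)+1 = -(n:ℤ) by ring] at hs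
      have hpas := gbinom_pascal (x + (-(n:ℤ)-1 : ℤ)) k
      rw [show (x + ((-(n:ℤ)-1 : ℤ)):ℚ) + 1 = x + (-(n:ℤ) : ℤ) by push_cast; ring] at hpas
      have h1 := ih (k+1)
      linarith [hs, hpas, h1, ihk]

lemma prod_neg_one_sub (n : ℕ) :
    ∏ i ∈ Finset.range n, (-1 - (i:ℤ)) = (-1)^n * n.factorial := by
  induction n with
  | zero => simp
  | succ n ih =>
    rw [Finset.prod_range_succ, ih, Nat.factorial_succ]
    push_cast
    ring

/-- The key congruence: `C(sp,j) ≡ sp·(-1)^{j-1}/j (mod p²)` for `1 ≤ j ≤ p-1`. -/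
lemma key_congr (p : ℕ) (hp : p.Prime) (s : ℤ) (j : ℕ) (hj1 : 1 ≤ j) (hjp : j ≤ p - 1)
    (w : ℤ) (hw : (j:ℤ) * w ≡ 1 [ZMOD (p:ℤ)]) :
    ∃ m : ℤ, gbinom ((s * p : ℤ) : ℚ) j
      = (s:ℚ) * p * (-1)^(j-1) * (w:ℚ) + (p:ℚ)^2 * m := by
  haveI := Fact.mk hp
  have hp2 : 2 ≤ p := hp.two_le
  obtain ⟨j', rfl⟩ := Nat.exists_eq_succ_of_ne_zero (Nat.one_le_iff_ne_zero.mp hj1)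
  obtain ⟨B, hB⟩ := gbinom_int (s*p) (j'+1)
  obtain ⟨C, hC⟩ := gbinom_int (s*p - 1) j'
  have habs : ((j'+1 : ℕ) : ℤ) * B = (s*p) * C := by
    have h := gbinom_absorb ((s*p:ℤ):ℚ) j'
    rw [hB, show ((s*p:ℤ):ℚ) - 1 = ((s*p - 1 : ℤ):ℚ) by push_cast; ring, hC] at h
    exact_mod_cast h
  have hfac : (j'.factorial : ℤ) * C = ∏ i ∈ Finset.range j', ((s*p - 1 : ℤ) - i) := by
    have h : gbinom ((s*p-1:ℤ):ℚ) j'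
        = (∏ i ∈ Finset.range j', (((s*p-1:ℤ):ℚ) - i)) / (j'.factorial : ℚ) := rfl
    rw [hC] at h
    have hf : (j'.factorial : ℚ) ≠ 0 := by positivity
    field_simp at h
    have h2 : (j'.factorial : ℚ) * C = ∏ x ∈ Finset.range j', ((s:ℚ)*p - 1 - x) := by
      push_cast at h; rw [← h]; ring
    exact_mod_cast h2
  have hZ : ((j'.factorial : ℕ) : ZMod p) * ((C:ℤ) : ZMod p)
      = ((j'.factorial : ℕ) : ZMod p) * (-1)^j' := by
    have h1 := congrArg (fun z : ℤ => (z : ZMod p)) hfac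
    have h2 := congrArg (fun z : ℤ => (z : ZMod p)) (prod_neg_one_sub j')
    push_cast at h1 h2
    rw [h1, ← mul_comm ((-1 : ZMod p)^j') _, ← h2]
    apply Finset.prod_congr rfl
    intro i _
    simp [ZMod.natCast_self]
  have hfne : ((j'.factorial : ℕ) : ZMod p) ≠ 0 := by
    rw [Ne, ZMod.natCast_eq_zero_iff]
    intro h
    have := (Nat.Prime.dvd_factorial hp).mp h
    omega
  have hCz : ((C:ℤ) : ZMod p) = (-1)^j' := mul_left_cancel₀ hfne hZ
  have hdvd : (p:ℤ) ∣ C - (-1)^j' := by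
    have h0 : ((C - (-1)^j' : ℤ) : ZMod p) = 0 := by push_cast [hCz]; ring
    exact_mod_cast (ZMod.intCast_zmod_eq_zero_iff_dvd _ _).mp h0
  obtain ⟨t, ht⟩ := hdvd
  have hu : (p:ℤ) ∣ 1 - ((j'+1 : ℕ):ℤ) * w := hw.dvd
  obtain ⟨u, hu⟩ := hu
  have hjD : ((j'+1 : ℕ):ℤ) * (B - s*p*(-1)^j'*w) = (p:ℤ)^2 * (s*t + s*(-1)^j'*u) := by
    have ht' : C = (-1)^j' + p * t := by linarith [ht]
    linear_combination habs + s*(p:ℤ)*ht' + s*(p:ℤ)*(-1)^j'*hu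
  have hcop : IsCoprime ((p:ℤ)^2) ((j'+1 : ℕ):ℤ) := by
    have h1 : Nat.Coprime (j'+1) p :=
      Nat.coprime_comm.mp (hp.coprime_iff_not_dvd.mpr (Nat.not_dvd_of_pos_of_lt (by omega) (by omega)))
    have h2 : Nat.Coprime (j'+1) (p^2) := h1.pow_right 2
    have := Nat.isCoprime_iff_coprime.mpr h2
    push_cast at this
    exact this.symm
  have hdvd2 : (p:ℤ)^2 ∣ (B - s*p*(-1)^j'*w) :=
    hcop.dvd_of_dvd_mul_left ⟨_, hjD⟩
  obtain ⟨m, hm⟩ := hdvd2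
  refine ⟨m, ?_⟩
  simp only [Nat.succ_eq_add_one, Nat.add_sub_cancel]
  rw [hB]
  have hBm : B = s*p*(-1)^j'*w + (p:ℤ)^2 * m := by linarith [hm]
  rw [hBm]
  push_cast
  ring

/-- For an odd prime `p`, integers `s, α` and `0 ≤ k ≤ p-1`,
`C(α+sp,k) ≡ C(α,k) + sp ∑_{j=1}^{k} C(α,k-j)(-1)^{j-1}/j  (mod p²)`,
where `inv j` is any integer inverse of `j` modulo `p`. -/
theorem binom_shift_mod_p_sq (p : ℕ) (hp : p.Prime) (hodd : Odd p)
    (s α : ℤ) (k : ℕ) (hk : k ≤ p - 1)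
    (inv : ℕ → ℤ) (hinv : ∀ j, 1 ≤ j → j ≤ k → (j : ℤ) * inv j ≡ 1 [ZMOD (p : ℤ)]) :
    ∃ m : ℤ, gbinom ((α : ℚ) + s * p) k
      = gbinom (α : ℚ) k
        + s * p * (∑ j ∈ Finset.Icc 1 k, gbinom (α : ℚ) (k - j) * (-1)^(j-1) * (inv j : ℚ))
        + (p : ℚ)^2 * m := by
  haveI := Fact.mk hp
  have hz : ∀ i : ℕ, ∃ z : ℤ, gbinom (α:ℚ) i = z := fun i => gbinom_int α i
  choose z hzs using hz
  have hm : ∀ i : ℕ, ∃ mi : ℤ, i < k → gbinom ((s*p:ℤ):ℚ) (i+1)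
      = (s:ℚ)*p*(-1)^i*(inv (i+1) : ℚ) + (p:ℚ)^2*mi := by
    intro i
    by_cases hik : i < k
    · obtain ⟨mi, hmi⟩ := key_congr p hp s (i+1) (by omega) (by omega) (inv (i+1))
        (hinv (i+1) (by omega) (by omega))
      refine ⟨mi, fun _ => ?_⟩
      simpa using hmi
    · exact ⟨0, fun h => absurd h hik⟩
  choose mf hmf using hm
  refine ⟨∑ i ∈ Finset.range k, z (k-(i+1)) * mf i, ?_⟩
  have hvd := gbinom_vandermonde (α:ℚ) (s*p) k
  rw [show (α:ℚ) + (s:ℚ) * (p:ℚ) = (α:ℚ) + ((s*p:ℤ):ℚ) by push_cast; ring, hvd]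
  unfold gS
  rw [Finset.sum_range_succ' (fun j => gbinom (α:ℚ) (k-j) * gbinom ((s*p:ℤ):ℚ) j)]
  have hIcc : ∑ j ∈ Finset.Icc 1 k, gbinom (α:ℚ) (k-j) * (-1:ℚ)^(j-1) * (inv j : ℚ)
      = ∑ i ∈ Finset.range k, gbinom (α:ℚ) (k-(i+1)) * (-1:ℚ)^i * (inv (i+1) : ℚ) := by
    rw [← Finset.Ico_add_one_right_eq_Icc, Finset.sum_Ico_eq_sum_range]
    apply Finset.sum_congr (by norm_num)
    intro i _
    rw [show 1+i = i+1 by ring]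
    simp
  rw [hIcc]
  rw [Nat.sub_zero, gbinom_zero, mul_one]
  have hcongr : ∑ i ∈ Finset.range k, gbinom (α:ℚ) (k-(i+1)) * gbinom ((s*p:ℤ):ℚ) (i+1)
      = ∑ i ∈ Finset.range k,
          gbinom (α:ℚ) (k-(i+1)) * ((s:ℚ)*p*(-1)^i*(inv (i+1):ℚ) + (p:ℚ)^2 * mf i) :=
    Finset.sum_congr rfl (fun i hi => by rw [hmf i (Finset.mem_range.mp hi)])
  rw [hcongr]
  have hsplit : ∑ i ∈ Finset.range k,
        gbinom (α:ℚ) (k-(i+1)) * ((s:ℚ)*p*(-1)^i*(inv (i+1):ℚ) + (p:ℚ)^2 * mf i)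
      = (s:ℚ)*p * (∑ i ∈ Finset.range k, gbinom (α:ℚ) (k-(i+1)) * (-1)^i * (inv (i+1):ℚ))
        + ∑ i ∈ Finset.range k, gbinom (α:ℚ) (k-(i+1)) * ((p:ℚ)^2 * mf i) := by
    rw [Finset.mul_sum, ← Finset.sum_add_distrib]
    apply Finset.sum_congr rfl
    intro i _
    ring
  rw [hsplit]
  have hsum2 : ∑ i ∈ Finset.range k, gbinom (α:ℚ) (k-(i+1)) * ((p:ℚ)^2 * mf i)
      = (p:ℚ)^2 * ((∑ i ∈ Finset.range k, z (k-(i+1)) * mf i : ℤ) : ℚ) := by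
    push_cast
    rw [Finset.mul_sum]
    apply Finset.sum_congr rfl
    intro i _
    rw [hzs (k-(i+1))]
    ring
  rw [hsum2]
  ring
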